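/- arXiv:1804.04787 — 2 statements merged into one kernel-verified Lean document; each statement's English description precedes it below -/
import Mathlib

section
/- Let T be a tournament. Then T belongs to 𝒞_{(r,s)} for every pair of positive integers r and s if and only if there exists an incomparable vertex ordering of T. -/
/-- A tournament: a finite vertex type with an orientation of each pair of
distinct vertices. -/
structure Tournament : Type 1 where
  V : Type
  [fintypeV : Fintype V]
  adj : V → V → Prop
  irrefl : ∀ v, ¬ adj v v
  total : ∀ u v, u ≠ v → adj u v ∨ adj v u
  asymm : ∀ u v, adj u v → ¬ adj v u

attribute [instance] Tournament.fintypeV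

namespace Tournament

/-- A set of vertices is transitive: the induced subtournament has no directed
cycle (equivalently, the adjacency relation is transitive on it). -/
def IsTransSet (T : Tournament) (S : Set T.V) : Prop :=
  ∀ a ∈ S, ∀ b ∈ S, ∀ c ∈ S, T.adj a b → T.adj b c → T.adj a c

/-- The chromatic number of a tournament: least number of transitive sets
partitioning the vertex set. -/
noncomputable def chromNum (T : Tournament) : ℕ :=
  sInf {k | ∃ c : T.V → Fin k, ∀ i, T.IsTransSet {v | c v = i}}

/-- `T.Contains S`: `S` is isomorphic to a subtournament of `T`. -/
def Contains (T S : Tournament) : Prop :=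
  ∃ f : S.V → T.V, Function.Injective f ∧ ∀ u v, S.adj u v ↔ T.adj (f u) (f v)

/-- `T.Iso S`: `T` and `S` are isomorphic tournaments. -/
def Iso (T S : Tournament) : Prop :=
  ∃ f : S.V → T.V, Function.Bijective f ∧ ∀ u v, S.adj u v ↔ T.adj (f u) (f v)

/-- A set of tournaments is heroic if excluding all its members bounds the
chromatic number. -/
def Heroic (H : Set Tournament) : Prop :=
  ∃ c, ∀ T : Tournament, (∀ X ∈ H, ¬ T.Contains X) → T.chromNum ≤ c

/-- A tournament is a hero if `{H}` is heroic. -/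
def IsHero (H : Tournament) : Prop :=
  ∃ c, ∀ T : Tournament, ¬ T.Contains H → T.chromNum ≤ c

/-- A class of tournaments is hereditary if closed under subtournaments up to
isomorphism. -/
def Hereditary (C : Set Tournament) : Prop :=
  ∀ T ∈ C, ∀ S : Tournament, T.Contains S → S ∈ C

def StronglyConnected (T : Tournament) : Prop :=
  ∀ u v : T.V, Relation.ReflTransGen T.adj u v

/-- A transitive tournament (no directed cycle). -/
def IsTransTour (T : Tournament) : Prop :=
  ∀ a b c : T.V, T.adj a b → T.adj b c → T.adj a c

/-- Direction rule for Δ-partitions with 0-based part-indices (a part is at an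
odd position in the 1-based sense iff its 0-based index is even).
`deltaDir i j` holds iff part `i` is complete to part `j`:
for `i < j`, part `j` beats part `i` iff both positions are (1-based) odd. -/
def deltaDir {m : ℕ} (i j : Fin m) : Prop :=
  (i < j ∧ ¬ (Even i.1 ∧ Even j.1)) ∨ (j < i ∧ (Even i.1 ∧ Even j.1))

theorem deltaDir_irrefl {m : ℕ} (i : Fin m) : ¬ deltaDir i i := by
  rintro (⟨h, _⟩ | ⟨h, _⟩) <;> exact lt_irrefl _ h

theorem deltaDir_total {m : ℕ} {i j : Fin m} (h : i ≠ j) : deltaDir i j ∨ deltaDir j i := by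
  rcases lt_or_gt_of_ne h with hl | hl
  · by_cases he : Even i.1 ∧ Even j.1
    · exact Or.inr (Or.inr ⟨hl, he.2, he.1⟩)
    · exact Or.inl (Or.inl ⟨hl, he⟩)
  · by_cases he : Even i.1 ∧ Even j.1
    · exact Or.inl (Or.inr ⟨hl, he⟩)
    · exact Or.inr (Or.inl ⟨hl, fun hc => he ⟨hc.2, hc.1⟩⟩)

theorem deltaDir_asymm {m : ℕ} {i j : Fin m} (h : deltaDir i j) : ¬ deltaDir j i := by
  rcases h with ⟨h1, h2⟩ | ⟨h1, h2⟩ <;> rintro (⟨g1, g2⟩ | ⟨g1, g2⟩)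
  · exact lt_asymm h1 g1
  · exact h2 ⟨g2.2, g2.1⟩
  · exact g2 ⟨h2.2, h2.1⟩
  · exact lt_asymm h1 g1

/-- The tournament `Δ(F 0, F 1, …, F (m-1))` given by a Δ-partition rule:
within a part use the part's edges; between parts, edges follow `deltaDir`.
For `m = 3` this is the trisection `Δ(A,B,C)` (`X ⇒ Y`, `Y ⇒ Z`, `Z ⇒ X`),
and for `m = 2` it is `F 0 ⇒ F 1`. -/
def deltaSum {m : ℕ} (F : Fin m → Tournament) : Tournament where
  V := (i : Fin m) × (F i).V
  adj x y := deltaDir x.1 y.1 ∨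
    ∃ (i : Fin m) (u v : (F i).V), (F i).adj u v ∧ x = ⟨i, u⟩ ∧ y = ⟨i, v⟩
  irrefl := by
    rintro x (h | ⟨i, u, v, hadj, rfl, h2⟩)
    · exact deltaDir_irrefl _ h
    · injection h2 with h h'
      subst h'
      exact (F i).irrefl u hadj
  total := by
    rintro ⟨i, a⟩ ⟨j, b⟩ hne
    by_cases hij : i = j
    · subst hij
      have hab : a ≠ b := fun h => hne (by rw [h])
      rcases (F i).total a b hab with h | h
      · exact Or.inl (Or.inr ⟨i, a, b, h, rfl, rfl⟩)
      · exact Or.inr (Or.inr ⟨i, b, a, h, rfl, rfl⟩)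
    · rcases deltaDir_total hij with h | h
      · exact Or.inl (Or.inl h)
      · exact Or.inr (Or.inl h)
  asymm := by
    rintro x y hxy hyx
    rcases hxy with h | ⟨i, u, v, hadj, rfl, rfl⟩
    · rcases hyx with g | ⟨j, p, q, gadj, rfl, rfl⟩
      · exact deltaDir_asymm h g
      · exact deltaDir_irrefl _ h
    · rcases hyx with g | ⟨j, p, q, gadj, h1, h2⟩
      · exact deltaDir_irrefl _ g
      · injection h1 with hij hp
        subst hij
        obtain rfl := eq_of_heq hp
        injection h2 with h h'
        subst h'
        exact (F i).asymm u v hadj gadj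

/-- The one-vertex tournament `I`. -/
def oneTour : Tournament where
  V := Unit
  adj _ _ := False
  irrefl := fun _ h => h
  total := fun u v h => (h (Subsingleton.elim u v)).elim
  asymm := fun _ _ h => h.elim

/-- The transitive tournament `L k` on `k` vertices. -/
def linTour (k : ℕ) : Tournament where
  V := Fin k
  adj i j := i < j
  irrefl := fun v => lt_irrefl v
  total := fun _ _ h => lt_or_gt_of_ne h
  asymm := fun _ _ h => lt_asymm h

/-- `Dtour n` is the tournament `D_n`: `D_1 = I`, `D_n = Δ(I, D_{n-1}, D_{n-1})`. -/
def Dtour : ℕ → Tournament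
  | 0 => oneTour
  | 1 => oneTour
  | n + 2 => deltaSum ![oneTour, Dtour (n + 1), Dtour (n + 1)]

/-- `Atour n` is the tournament `A_n`: `A_1 = I`, and `A_n` is a Δ-sum with
`2n-1` parts, the (1-based) odd positions being single vertices and the even
positions copies of `A_{n-1}`. -/
def Atour : ℕ → Tournament
  | 0 => oneTour
  | 1 => oneTour
  | n + 2 =>
      deltaSum fun t : Fin (2 * (n + 2) - 1) => if Even t.1 then oneTour else Atour (n + 1)

/-- `Utour n` is the tournament `U_n = Δ(I, I, …, I)` with `2n-1` one-vertex parts. -/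
def Utour (n : ℕ) : Tournament :=
  deltaSum fun _ : Fin (2 * n - 1) => oneTour

/-- `𝒟`: the closure of `{D_n : n ≥ 1}` under subtournaments up to isomorphism. -/
def classD : Set Tournament :=
  {T | ∃ n : ℕ, 1 ≤ n ∧ (Dtour n).Contains T}

/-- `𝒜`: the closure of `{A_n : n ≥ 1}` under subtournaments up to isomorphism. -/
def classA : Set Tournament :=
  {T | ∃ n : ℕ, 1 ≤ n ∧ (Atour n).Contains T}

/-- `Δ₂ = Δ(L₂, L₂, L₂)`. -/
def delta2 : Tournament :=
  deltaSum ![linTour 2, linTour 2, linTour 2]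

/-- The tournament `N`. -/
def Ntour : Tournament where
  V := Fin 5
  adj i j :=
    ![![false, true, false, true, false],
      ![false, false, true, true, true],
      ![true, false, false, true, true],
      ![false, false, false, false, true],
      ![true, false, false, false, false]] i j = true
  irrefl := by decide
  total := by decide
  asymm := by decide

/-- The tournament `S₃`: `v_i → v_j` iff `j - i ∈ {1, 2} (mod 5)`. -/
def Stour3 : Tournament where
  V := Fin 5
  adj i j := (j.1 + 5 - i.1) % 5 = 1 ∨ (j.1 + 5 - i.1) % 5 = 2
  irrefl := by decide
  total := by decide
  asymm := by decide

/-- A vertex `v` outside `S` is mixed on `S` if it has both an out-neighbor and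
an in-neighbor in `S`. -/
def MixedOn (T : Tournament) (v : T.V) (S : Set T.V) : Prop :=
  (∃ s ∈ S, T.adj v s) ∧ (∃ s ∈ S, T.adj s v)

/-- A homogeneous set: `1 < |S| < |V(T)|` and no vertex outside `S` is mixed on `S`. -/
def Homog (T : Tournament) (S : Set T.V) : Prop :=
  1 < S.ncard ∧ S.ncard < Nat.card T.V ∧ ∀ v ∉ S, ¬ T.MixedOn v S

/-- A prime tournament has no homogeneous set. -/
def Prime (T : Tournament) : Prop := ¬ ∃ S : Set T.V, T.Homog S

/-- `P` is a Δ-partition of `T` with parts `P 0, …, P (m-1)`: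
the parts are nonempty, partition `V(T)`, and all edges between distinct parts
follow the rule `deltaDir`. -/
def IsDeltaPartition (T : Tournament) {m : ℕ} (P : Fin m → Set T.V) : Prop :=
  (∀ i, (P i).Nonempty) ∧
  (∀ v : T.V, ∃! i, v ∈ P i) ∧
  (∀ i j, i ≠ j → ∀ u ∈ P i, ∀ v ∈ P j, (T.adj u v ↔ deltaDir i j))

/-- The induced subtournament on a set of vertices. -/
noncomputable def induce (T : Tournament) (S : Set T.V) : Tournament where
  V := ↥S
  fintypeV := (Set.toFinite S).fintype
  adj u v := T.adj u.1 v.1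
  irrefl := fun v => T.irrefl v.1
  total := fun u v h => T.total u.1 v.1 (fun hh => h (Subtype.ext hh))
  asymm := fun u v h => T.asymm u.1 v.1 h

/-- `u` and `v` are joined by an edge of the backedge graph of the ordering
given by the list `l`: the `T`-edge between them goes backwards in `l`. -/
def BackAdj (T : Tournament) (l : List T.V) (u v : T.V) : Prop :=
  (T.adj u v ∧ [v, u].Sublist l) ∨ (T.adj v u ∧ [u, v].Sublist l)

/-- The backedge graph `B_σ(T)` of the ordering `σ = l`. -/
def backGraph (T : Tournament) (l : List T.V) : SimpleGraph T.V where
  Adj u v := T.BackAdj l u v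
  symm := by
    constructor
    intro u v h
    rcases h with ⟨h, s⟩ | ⟨h, s⟩
    · exact Or.inr ⟨h, s⟩
    · exact Or.inl ⟨h, s⟩
  loopless := by
    constructor
    intro v h
    rcases h with ⟨h, _⟩ | ⟨h, _⟩ <;> exact T.irrefl v h

/-- Forest orderings: a one-element ordering is a forest ordering, and the
concatenation `l₁ ++ l₂` of two nonempty forest orderings is one provided no
two edges of the backedge graph going between `l₁` and `l₂` lie in the same
connected component of the backedge graph. -/
inductive IsForestOrdering (T : Tournament) : List T.V → Prop
  | single (v : T.V) : IsForestOrdering T [v]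
  | split (l₁ l₂ : List T.V) (h₁ : l₁ ≠ []) (h₂ : l₂ ≠ [])
      (hsep : ∀ a ∈ l₁, ∀ b ∈ l₂, ∀ c ∈ l₁, ∀ d ∈ l₂,
        T.BackAdj (l₁ ++ l₂) a b → T.BackAdj (l₁ ++ l₂) c d →
        Relation.ReflTransGen (T.BackAdj (l₁ ++ l₂)) a c → a = c ∧ b = d)
      (f₁ : IsForestOrdering T l₁) (f₂ : IsForestOrdering T l₂) :
      IsForestOrdering T (l₁ ++ l₂)

/-- A forest tournament: one admitting a forest ordering of its vertex set. -/
def IsForestTournament (T : Tournament) : Prop :=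
  ∃ l : List T.V, l.Nodup ∧ (∀ v, v ∈ l) ∧ IsForestOrdering T l

/-- The set of ordered pairs realizing backedges between `l₁` and `l₂`. -/
def splitEdges (T : Tournament) (l l₁ l₂ : List T.V) : Set (T.V × T.V) :=
  {p | p.1 ∈ l₁ ∧ p.2 ∈ l₂ ∧ T.BackAdj l p.1 p.2}

/-- The thickness of the backedge graph of `l`: the minimum number of backedges
crossing a split of `l` into two nonempty intervals. -/
noncomputable def thickness (T : Tournament) (l : List T.V) : ℕ :=
  sInf {k | ∃ l₁ l₂ : List T.V, l = l₁ ++ l₂ ∧ l₁ ≠ [] ∧ l₂ ≠ [] ∧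
    k = (T.splitEdges l l₁ l₂).ncard}

/-- The "length" `|φ x - φ y|` of an unordered pair under `φ`. -/
def phiLen {α : Type} (φ : α → ℕ) : Sym2 α → ℕ :=
  Sym2.lift ⟨fun u v => max (φ u) (φ v) - min (φ u) (φ v), fun u v => by
    show max (φ u) (φ v) - min (φ u) (φ v) = max (φ v) (φ u) - min (φ v) (φ u)
    rw [max_comm (φ u) (φ v), min_comm (φ u) (φ v)]⟩

/-- The backedge graph of the ordering `σ_φ` induced by `φ`. -/
def backGraphPhi (T : Tournament) (φ : T.V → ℕ) : SimpleGraph T.V where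
  Adj u v := (T.adj u v ∧ φ v < φ u) ∨ (T.adj v u ∧ φ u < φ v)
  symm := by
    constructor
    intro u v h
    rcases h with h | h
    · exact Or.inr h
    · exact Or.inl h
  loopless := by
    constructor
    intro v h
    rcases h with ⟨_, h⟩ | ⟨_, h⟩ <;> exact lt_irrefl _ h

/-- Two distinct edges `e`, `f` of `B_{σ_φ}(T)` are `(r,s)`-comparable under `φ`:
some path with at most `s` edges contains both, and `1/r ≤ φ(e)/φ(f) ≤ r`. -/
def Comparable (T : Tournament) (φ : T.V → ℕ) (r s : ℕ) (e f : Sym2 T.V) : Prop :=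
  e ≠ f ∧
  (∃ (a b : T.V) (p : (T.backGraphPhi φ).Walk a b),
      p.IsPath ∧ p.length ≤ s ∧ e ∈ p.edges ∧ f ∈ p.edges) ∧
  phiLen φ e ≤ r * phiLen φ f ∧ phiLen φ f ≤ r * phiLen φ e

/-- The class `𝒞_{(r,s)}`. -/
def classC (r s : ℕ) : Set Tournament :=
  {T | ∃ φ : T.V → ℕ, (∀ v, 0 < φ v) ∧ Function.Injective φ ∧
    ∀ e ∈ (T.backGraphPhi φ).edgeSet, ∀ f ∈ (T.backGraphPhi φ).edgeSet,
      ¬ Comparable T φ r s e f}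

/-- `φ` is `r`-incomparable: it is an injective positive labelling such that any
two distinct edges of `B_{σ_φ}(T)` in the same connected component have length
ratio greater than `r` (or less than `1/r`). -/
def RIncomp (T : Tournament) (φ : T.V → ℕ) (r : ℕ) : Prop :=
  (∀ v, 0 < φ v) ∧ Function.Injective φ ∧
  ∀ e ∈ (T.backGraphPhi φ).edgeSet, ∀ f ∈ (T.backGraphPhi φ).edgeSet, e ≠ f →
    (∃ a b, a ∈ e ∧ b ∈ f ∧ (T.backGraphPhi φ).Reachable a b) →
    (r * phiLen φ f < phiLen φ e ∨ r * phiLen φ e < phiLen φ f)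

/-- `l` is an ordering of the vertex set of `T`. -/
def IsOrdering (T : Tournament) (l : List T.V) : Prop :=
  l.Nodup ∧ ∀ v, v ∈ l

/-- The ordering `l` is incomparable: for every `r ≥ 1` there is an
`r`-incomparable `φ` with `σ_φ = l` (i.e. `φ` strictly increasing along `l`). -/
def IsIncompOrdering (T : Tournament) (l : List T.V) : Prop :=
  ∀ r : ℕ, 0 < r → ∃ φ : T.V → ℕ, RIncomp T φ r ∧ l.Pairwise (fun u v => φ u < φ v)

end Tournament


open SimpleGraph in
theorem exists_path_through_edges {V : Type} (G : SimpleGraph V)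
    {x y u v : V} (hxy : G.Adj x y) (huv : G.Adj u v)
    (hne : s(x, y) ≠ s(u, v)) (hreach : G.Reachable x u) :
    ∃ (a b : V) (p : G.Walk a b), p.IsPath ∧ s(x, y) ∈ p.edges ∧ s(u, v) ∈ p.edges := by
  classical
  set S : Set ℕ := {n | ∃ (p q : V) (w : G.Walk p q), (p = x ∨ p = y) ∧ (q = u ∨ q = v) ∧
    w.IsPath ∧ w.length = n} with hS
  obtain ⟨w0⟩ := hreach
  have hSne : S.Nonempty :=
    ⟨(w0.toPath : G.Path x u).1.length, x, u, (w0.toPath : G.Path x u).1,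
      Or.inl rfl, Or.inl rfl, (w0.toPath : G.Path x u).2, rfl⟩
  obtain ⟨p, q, w, hp, hq, hw, hlen⟩ := Nat.sInf_mem hSne
  obtain ⟨p2, hadj1, heq1, hp2xy⟩ : ∃ p2, G.Adj p2 p ∧ s(p2, p) = s(x, y) ∧ (p2 = x ∨ p2 = y) := by
    rcases hp with rfl | rfl
    · exact ⟨y, hxy.symm, Sym2.eq_swap, Or.inr rfl⟩
    · exact ⟨x, hxy, rfl, Or.inl rfl⟩
  obtain ⟨q2, hadj2, heq2, hq2uv⟩ : ∃ q2, G.Adj q2 q ∧ s(q, q2) = s(u, v) ∧ (q2 = u ∨ q2 = v) := by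
    rcases hq with rfl | rfl
    · exact ⟨v, huv.symm, rfl, Or.inr rfl⟩
    · exact ⟨u, huv, Sym2.eq_swap, Or.inl rfl⟩
  have hp2 : p2 ∉ w.support := by
    intro hmem
    have hnep : p2 ≠ p := hadj1.ne
    have hsum : (w.takeUntil p2 hmem).length + (w.dropUntil p2 hmem).length = w.length := by
      rw [← Walk.length_append, Walk.take_spec]
    have htk : 0 < (w.takeUntil p2 hmem).length := by
      rcases Nat.eq_zero_or_pos (w.takeUntil p2 hmem).length with h0 | h
      · exact absurd (Walk.eq_of_length_eq_zero h0).symm hnep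
      · exact h
    have hmemS : (w.dropUntil p2 hmem).length ∈ S :=
      ⟨p2, q, w.dropUntil p2 hmem, hp2xy, hq, hw.dropUntil hmem, rfl⟩
    have := Nat.sInf_le hmemS
    omega
  have hq2 : q2 ∉ w.support := by
    intro hmem
    have hneq : q2 ≠ q := hadj2.ne
    have hsum : (w.takeUntil q2 hmem).length + (w.dropUntil q2 hmem).length = w.length := by
      rw [← Walk.length_append, Walk.take_spec]
    have htk : 0 < (w.dropUntil q2 hmem).length := by
      rcases Nat.eq_zero_or_pos (w.dropUntil q2 hmem).length with h0 | h
      · exact absurd (Walk.eq_of_length_eq_zero h0) hneq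
      · exact h
    have hmemS : (w.takeUntil q2 hmem).length ∈ S :=
      ⟨p, q2, w.takeUntil q2 hmem, hp, hq2uv, hw.takeUntil hmem, rfl⟩
    have := Nat.sInf_le hmemS
    omega
  have hp2q2 : p2 ≠ q2 := by
    intro h
    have hmemS : (0 : ℕ) ∈ S :=
      ⟨p2, p2, Walk.nil, hp2xy, h ▸ hq2uv, Walk.IsPath.nil, rfl⟩
    have h0 : w.length = 0 := by
      have := Nat.sInf_le hmemS; omega
    have hpq : p = q := Walk.eq_of_length_eq_zero h0
    apply hne
    rw [← heq1, ← heq2, hpq, h, Sym2.eq_swap]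
  -- build the final path
  have hq2r : q2 ∉ w.reverse.support := by rwa [Walk.support_reverse, List.mem_reverse]
  let w1 : G.Walk q2 p := Walk.cons hadj2 w.reverse
  have hw1 : w1.IsPath := hw.reverse.cons hq2r
  have hp2w1r : p2 ∉ w1.reverse.support := by
    rw [Walk.support_reverse, List.mem_reverse]
    simp only [w1, Walk.support_cons, List.mem_cons]
    rintro (h | h)
    · exact hp2q2 h
    · rw [Walk.support_reverse, List.mem_reverse] at h; exact hp2 h
  refine ⟨p2, q2, Walk.cons hadj1 w1.reverse, hw1.reverse.cons hp2w1r, ?_, ?_⟩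
  · rw [Walk.edges_cons, ← heq1]; exact List.mem_cons_self
  · rw [Walk.edges_cons]
    refine List.mem_cons_of_mem _ ?_
    rw [Walk.edges_reverse, List.mem_reverse]
    simp only [w1, Walk.edges_cons, List.mem_cons]
    left
    rw [← heq2, Sym2.eq_swap]

open Tournament SimpleGraph in
theorem rincomp_of_classC (T : Tournament) (r : ℕ) (φ : T.V → ℕ)
    (hpos : ∀ v, 0 < φ v) (hinj : Function.Injective φ)
    (hC : ∀ e ∈ (T.backGraphPhi φ).edgeSet, ∀ f ∈ (T.backGraphPhi φ).edgeSet,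
      ¬ Comparable T φ r (Fintype.card T.V + 1) e f) :
    RIncomp T φ r := by
  refine ⟨hpos, hinj, ?_⟩
  intro e
  induction e using Sym2.ind with
  | _ x y =>
    intro he f
    induction f using Sym2.ind with
    | _ u v =>
      intro hf hef hreach
      by_contra hcon
      push_neg at hcon
      obtain ⟨h1, h2⟩ := hcon
      have hadjxy : (T.backGraphPhi φ).Adj x y := (T.backGraphPhi φ).mem_edgeSet.mp he
      have hadjuv : (T.backGraphPhi φ).Adj u v := (T.backGraphPhi φ).mem_edgeSet.mp hf
      obtain ⟨a, b, ha, hb, hr⟩ := hreach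
      have hxa : (T.backGraphPhi φ).Reachable x a := by
        rcases Sym2.mem_iff.mp ha with rfl | rfl
        · exact SimpleGraph.Reachable.refl _
        · exact hadjxy.reachable
      have hbu : (T.backGraphPhi φ).Reachable b u := by
        rcases Sym2.mem_iff.mp hb with rfl | rfl
        · exact SimpleGraph.Reachable.refl _
        · exact hadjuv.reachable.symm
      have hxu : (T.backGraphPhi φ).Reachable x u := (hxa.trans hr).trans hbu
      obtain ⟨a', b', p, hp, hep, hfp⟩ :=
        exists_path_through_edges (T.backGraphPhi φ) hadjxy hadjuv hef hxu
      have hplen : p.length ≤ Fintype.card T.V + 1 := by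
        have := hp.length_lt
        omega
      exact hC _ he _ hf ⟨hef, ⟨a', b', p, hp, hplen, hep, hfp⟩, h1, h2⟩

open Tournament in
theorem rincomp_mono (T : Tournament) {φ : T.V → ℕ} {r r' : ℕ}
    (h : RIncomp T φ r') (hle : r ≤ r') : RIncomp T φ r :=
  ⟨h.1, h.2.1, fun e he f hf hef hr => (h.2.2 e he f hf hef hr).imp
    (fun hlt => lt_of_le_of_lt (Nat.mul_le_mul hle le_rfl) hlt)
    (fun hlt => lt_of_le_of_lt (Nat.mul_le_mul hle le_rfl) hlt)⟩

open Tournament in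
/-- A tournament belongs to `𝒞_{(r,s)}` for all positive `r`, `s`
iff it has an incomparable vertex ordering. -/
theorem mem_classC_iff_incompOrdering (T : Tournament) :
    (∀ r s : ℕ, 0 < r → 0 < s → T ∈ classC r s) ↔
      ∃ l : List T.V, IsOrdering T l ∧ IsIncompOrdering T l := by
  constructor
  · intro h
    classical
    have key : ∀ r : ℕ, ∃ φ : T.V → ℕ, RIncomp T φ (r + 1) := by
      intro r
      obtain ⟨φ, hpos, hinj, hC⟩ :=
        h (r + 1) (Fintype.card T.V + 1) (Nat.succ_pos r) (Nat.succ_pos _)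
      exact ⟨φ, rincomp_of_classC T (r + 1) φ hpos hinj hC⟩
    choose ψ hψ using key
    obtain ⟨b, hbinf'⟩ :=
      Finite.exists_infinite_fiber (fun r : ℕ => fun u v : T.V => decide (ψ r u < ψ r v))
    have hbinf := Set.infinite_coe_iff.mp hbinf'
    obtain ⟨r0, hr0⟩ := hbinf.nonempty
    have hr0' : (fun u v : T.V => decide (ψ r0 u < ψ r0 v)) = b := hr0
    let R : T.V → T.V → Prop := fun u v => ψ r0 u ≤ ψ r0 v
    haveI : DecidableRel R := fun u v => inferInstanceAs (Decidable (ψ r0 u ≤ ψ r0 v))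
    haveI : IsTrans T.V R := ⟨fun _ _ _ h1 h2 => le_trans h1 h2⟩
    haveI : IsAntisymm T.V R := ⟨fun u v h1 h2 => (hψ r0).2.1 (le_antisymm h1 h2)⟩
    haveI : IsTotal T.V R := ⟨fun u v => le_total _ _⟩
    set l := Finset.univ.sort R with hldef
    have hnodup : l.Nodup := Finset.sort_nodup Finset.univ R
    have hmem : ∀ v : T.V, v ∈ l := fun v => (Finset.mem_sort R).mpr (Finset.mem_univ v)
    have hpair0 : l.Pairwise fun u v => ψ r0 u < ψ r0 v := by
      have hs : l.Pairwise R := Finset.pairwise_sort Finset.univ R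
      exact (hs.and hnodup).imp fun hab =>
        lt_of_le_of_ne hab.1 fun heq => hab.2 ((hψ r0).2.1 heq)
    refine ⟨l, ⟨hnodup, hmem⟩, ?_⟩
    intro r hr
    obtain ⟨r', hr'mem, hrr'⟩ := hbinf.exists_gt r
    have hr'' : (fun u v : T.V => decide (ψ r' u < ψ r' v)) = b := hr'mem
    refine ⟨ψ r', rincomp_mono T (hψ r') (by omega), ?_⟩
    have hfun : (fun u v : T.V => decide (ψ r' u < ψ r' v)) =
        fun u v : T.V => decide (ψ r0 u < ψ r0 v) := hr''.trans hr0'.symm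
    refine hpair0.imp @fun u v hlt => ?_
    have hdec := congrFun (congrFun hfun u) v
    exact (decide_eq_decide.mp hdec).mpr hlt
  · rintro ⟨l, _, hinc⟩ r s hr hs
    classical
    obtain ⟨φ, ⟨hpos, hinj, hkey⟩, _⟩ := hinc r hr
    refine ⟨φ, hpos, hinj, ?_⟩
    intro e he f hf hcomp
    obtain ⟨hef, ⟨a, b, p, hp, hlen, hep, hfp⟩, h1, h2⟩ := hcomp
    have hsup : ∀ g : Sym2 T.V, g ∈ p.edges → ∃ c, c ∈ g ∧ c ∈ p.support := by
      intro g
      induction g using Sym2.ind with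
      | _ x y => exact fun hg => ⟨x, Sym2.mem_mk_left x y, p.fst_mem_support_of_mem_edges hg⟩
    obtain ⟨a', ha'e, ha's⟩ := hsup e hep
    obtain ⟨b', hb'f, hb's⟩ := hsup f hfp
    have hre : (T.backGraphPhi φ).Reachable a' b' :=
      (SimpleGraph.Reachable.symm ⟨p.takeUntil a' ha's⟩).trans ⟨p.takeUntil b' hb's⟩
    rcases hkey e he f hf hef ⟨a', b', ha'e, hb'f, hre⟩ with hlt | hlt
    · exact absurd h1 (not_le.mpr hlt)
    · exact absurd h2 (not_le.mpr hlt)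
end

section
/- The class 𝒜 contains the tournaments U_3 and Δ_2, but contains none of the tournaments D_3, N, S_3. -/
set_option synthInstance.maxSize 4000
set_option maxHeartbeats 4000000
set_option maxRecDepth 10000

namespace Tournament

instance : Subsingleton oneTour.V := inferInstanceAs (Subsingleton Unit)
instance : DecidableEq oneTour.V := inferInstanceAs (DecidableEq Unit)
instance : DecidableRel oneTour.adj := fun _ _ => isFalse id
instance {k : ℕ} : DecidableEq (linTour k).V :=
  inferInstanceAs (DecidableEq (Fin k))
instance {k : ℕ} : DecidableRel (linTour k).adj := fun a b => Fin.decLt a b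

instance deltaDirDec {m : ℕ} (i j : Fin m) : Decidable (deltaDir i j) :=
  inferInstanceAs (Decidable ((i < j ∧ ¬ (Even i.1 ∧ Even j.1)) ∨ (j < i ∧ (Even i.1 ∧ Even j.1))))

instance deltaSumDecEq {m : ℕ} (F : Fin m → Tournament)
    [∀ i, DecidableEq (F i).V] : DecidableEq (deltaSum F).V :=
  inferInstanceAs (DecidableEq ((i : Fin m) × (F i).V))

instance deltaSumDecAdj {m : ℕ} (F : Fin m → Tournament)
    [∀ i, DecidableEq (F i).V] [∀ i, DecidableRel (F i).adj] :
    DecidableRel (deltaSum F).adj := fun x y =>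
  have : ∀ (z : (deltaSum F).V) (i : Fin m) (u : (F i).V), Decidable (z = ⟨i, u⟩) :=
    fun z i u => deltaSumDecEq F z ⟨i, u⟩
  inferInstanceAs (Decidable (deltaDir x.1 y.1 ∨
    ∃ (i : Fin m) (u v : (F i).V), (F i).adj u v ∧ x = ⟨i, u⟩ ∧ y = ⟨i, v⟩))

instance vecConsDecEq (T : Tournament) {m : ℕ} (F : Fin m → Tournament)
    [hT : DecidableEq T.V] [hF : ∀ i, DecidableEq (F i).V] :
    ∀ i, DecidableEq ((Matrix.vecCons T F) i).V := fun i =>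
  @Fin.cases m (fun i => DecidableEq ((Matrix.vecCons T F) i).V) hT (fun j => hF j) i

instance vecConsDecAdj (T : Tournament) {m : ℕ} (F : Fin m → Tournament)
    [hT : DecidableRel T.adj] [hF : ∀ i, DecidableRel (F i).adj] :
    ∀ i, DecidableRel ((Matrix.vecCons T F) i).adj := fun i =>
  @Fin.cases m (fun i => DecidableRel ((Matrix.vecCons T F) i).adj) hT (fun j => hF j) i

instance vecEmptyDecEq : ∀ i : Fin 0, DecidableEq ((Matrix.vecEmpty : Fin 0 → Tournament) i).V :=
  fun i => i.elim0
instance vecEmptyDecAdj : ∀ i : Fin 0, DecidableRel ((Matrix.vecEmpty : Fin 0 → Tournament) i).adj :=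
  fun i => i.elim0

lemma deltaSum_adj_ne {m : ℕ} {F : Fin m → Tournament} {x y : (deltaSum F).V}
    (h : x.1 ≠ y.1) : (deltaSum F).adj x y ↔ deltaDir x.1 y.1 := by
  constructor
  · rintro (hd | ⟨i, u, v, ha, rfl, rfl⟩)
    · exact hd
    · exact absurd rfl h
  · exact Or.inl

lemma deltaSum_adj_eq {m : ℕ} {F : Fin m → Tournament} {i : Fin m} {u v : (F i).V} :
    (deltaSum F).adj ⟨i, u⟩ ⟨i, v⟩ ↔ (F i).adj u v := by
  constructor
  · rintro (hd | ⟨j, p, q, ha, h1, h2⟩)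
    · exact absurd hd (deltaDir_irrefl i)
    · cases h1; cases h2; exact ha
  · exact fun h => Or.inr ⟨i, u, v, h, rfl, rfl⟩

lemma contains_refl (T : Tournament) : T.Contains T :=
  ⟨id, Function.injective_id, fun _ _ => Iff.rfl⟩

lemma contains_trans {T S R : Tournament} (h1 : T.Contains S) (h2 : S.Contains R) :
    T.Contains R := by
  obtain ⟨f, hf, hfa⟩ := h1
  obtain ⟨g, hg, hga⟩ := h2
  exact ⟨f ∘ g, hf.comp hg, fun u v => (hga u v).trans (hfa _ _)⟩

lemma contains_one (T : Tournament) (h : Nonempty T.V) : T.Contains oneTour := by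
  obtain ⟨v⟩ := h
  exact ⟨fun _ => v, fun a b _ => Subsingleton.elim a b,
    fun u w => iff_of_false id (T.irrefl v)⟩

lemma contains_L2 (T : Tournament) {a b : T.V} (h : T.adj a b) :
    T.Contains (linTour 2) := by
  have hab : a ≠ b := fun e => T.irrefl a (e ▸ h)
  refine ⟨![a, b], ?_, ?_⟩
  · intro u v huv
    fin_cases u <;> fin_cases v <;>
      first
      | rfl
      | exact absurd huv hab
      | exact absurd huv.symm hab
  · intro u v
    fin_cases u <;> fin_cases v
    · exact iff_of_false (Nat.lt_irrefl 0) (T.irrefl a)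
    · exact iff_of_true Nat.zero_lt_one h
    · exact iff_of_false (Nat.not_succ_le_zero 1) (T.asymm a b h)
    · exact iff_of_false (Nat.lt_irrefl 1) (T.irrefl b)

lemma atour_nonempty : ∀ n, Nonempty (Atour n).V
  | 0 => ⟨()⟩
  | 1 => ⟨()⟩
  | n + 2 => by
    refine ⟨⟨⟨0, by omega⟩, ?_⟩⟩
    have h : (if Even ((⟨0, by omega⟩ : Fin (2 * (n + 2) - 1))).1 then oneTour
        else Atour (n + 1)) = oneTour := if_pos Even.zero
    exact cast (congrArg Tournament.V h).symm ()

lemma deltaEmbed {k m : ℕ} {G : Fin k → Tournament} {F : Fin m → Tournament}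
    (ρ : Fin k → Fin m) (hd : ∀ i j, deltaDir i j → deltaDir (ρ i) (ρ j))
    (hc : ∀ i, (F (ρ i)).Contains (G i)) :
    (deltaSum F).Contains (deltaSum G) := by
  choose e he ha using hc
  have hρ : ∀ i j : Fin k, i ≠ j → ρ i ≠ ρ j := by
    intro i j hij heq
    rcases deltaDir_total hij with h | h
    · have h2 := hd i j h
      rw [heq] at h2
      exact deltaDir_irrefl _ h2
    · have h2 := hd j i h
      rw [heq] at h2
      exact deltaDir_irrefl _ h2
  refine ⟨fun x => ⟨ρ x.1, e x.1 x.2⟩, ?_, ?_⟩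
  · rintro ⟨i, u⟩ ⟨j, v⟩ hev
    obtain ⟨h1, h2⟩ := Sigma.mk.inj_iff.1 hev
    have hij : i = j := by
      by_contra hne
      exact hρ i j hne h1
    subst hij
    obtain rfl : u = v := he i (eq_of_heq h2)
    rfl
  · rintro ⟨i, u⟩ ⟨j, v⟩
    by_cases hij : i = j
    · subst hij
      exact deltaSum_adj_eq.trans ((ha i u v).trans deltaSum_adj_eq.symm)
    · rw [deltaSum_adj_ne (x := (⟨i, u⟩ : (deltaSum G).V)) (y := ⟨j, v⟩) (show i ≠ j from hij),
        deltaSum_adj_ne (x := (⟨ρ i, e i u⟩ : (deltaSum F).V)) (y := ⟨ρ j, e j v⟩) (hρ i j hij)]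
      constructor
      · exact hd i j
      · intro h
        rcases deltaDir_total (show i ≠ j from hij) with h' | h'
        · exact h'
        · exact absurd h (deltaDir_asymm (hd j i h'))

end Tournament

namespace Tournament

lemma part_contains {m : ℕ} {F : Fin m → Tournament} {H : Tournament}
    (f : H.V → (deltaSum F).V) (finj : Function.Injective f)
    (hf : ∀ u v, H.adj u v ↔ (deltaSum F).adj (f u) (f v))
    (t0 : Fin m) (hconst : ∀ v, (f v).1 = t0) : (F t0).Contains H := by
  have ev : ∀ v, (F (f v).1).V = (F t0).V := fun v => congrArg (fun t => (F t).V) (hconst v)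
  refine ⟨fun v => cast (ev v) (f v).2, ?_, ?_⟩
  · intro u v huv
    apply finj
    refine Sigma.ext ((hconst u).trans (hconst v).symm) ?_
    exact ((cast_heq (ev u) (f u).2).symm.trans (heq_of_eq huv)).trans (cast_heq (ev v) (f v).2)
  · intro u v
    rw [hf u v]
    have gen : ∀ (x y : (deltaSum F).V) (hx : x.1 = t0) (hy : y.1 = t0),
        (deltaSum F).adj x y ↔
          (F t0).adj (cast (congrArg (fun t => (F t).V) hx) x.2)
            (cast (congrArg (fun t => (F t).V) hy) y.2) := by
      rintro ⟨i, xu⟩ ⟨j, yu⟩ hx hy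
      dsimp only at hx hy
      subst hx
      subst hy
      rw [cast_eq, cast_eq]
      exact deltaSum_adj_eq
    exact gen (f u) (f v) (hconst u) (hconst v)

/-- `H` has a "split": a nonempty proper vertex subset complete to its complement. -/
abbrev HasSplit (H : Tournament) : Prop :=
  ∃ A : Finset H.V, A.Nonempty ∧ (∃ b, b ∉ A) ∧ ∀ x ∈ A, ∀ y ∉ A, H.adj x y

/-- `H` has a "bad set": a transitive set of size ≥ 2 serving as the singleton
parts of an A-type Δ-partition. -/
abbrev HasBad (H : Tournament) [DecidableRel H.adj] : Prop :=
  ∃ S : Finset H.V, 2 ≤ S.card ∧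
    (∀ a ∈ S, ∀ b ∈ S, ∀ c ∈ S, H.adj a b → H.adj b c → H.adj a c) ∧
    (∀ v ∉ S, ∀ s ∈ S, ∀ t ∈ S, H.adj s v → H.adj s t → H.adj t v) ∧
    (∀ u, u ∉ S → ∀ v, v ∉ S →
      (S.filter (fun s => H.adj s u)).card < (S.filter (fun s => H.adj s v)).card →
        H.adj u v)

theorem not_contains_atour (H : Tournament) [DecidableRel H.adj]
    (h2 : ∃ u v : H.V, u ≠ v) (hs : ¬ HasSplit H) (hb : ¬ HasBad H) :
    ∀ n, ¬ (Atour n).Contains H := by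
  intro n
  induction n using Nat.strong_induction_on with
  | _ n IH =>
  match n, IH with
  | 0, _ =>
    rintro ⟨f, finj, -⟩
    obtain ⟨a, b, hab⟩ := h2
    exact hab (finj (Subsingleton.elim (α := Unit) (f a) (f b)))
  | 1, _ =>
    rintro ⟨f, finj, -⟩
    obtain ⟨a, b, hab⟩ := h2
    exact hab (finj (Subsingleton.elim (α := Unit) (f a) (f b)))
  | n + 2, IH =>
    rintro ⟨f, finj, hf⟩
    set F : Fin (2 * (n + 2) - 1) → Tournament :=
      fun t => if Even t.1 then oneTour else Atour (n + 1) with hF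
    have hf' : ∀ u v, H.adj u v ↔ (deltaSum F).adj (f u) (f v) := hf
    have finj' : Function.Injective (f : H.V → (deltaSum F).V) := finj
    set π : H.V → Fin (2 * (n + 2) - 1) := fun v => (f v : (deltaSum F).V).1 with hπ
    have key : ∀ u v, π u ≠ π v → (H.adj u v ↔ deltaDir (π u) (π v)) := by
      intro u v h
      exact (hf' u v).trans (deltaSum_adj_ne h)
    have key2 : ∀ u v, Even (π u).1 → π u = π v → u = v := by
      intro u v he hpi
      apply finj'
      have hsub : Subsingleton (F (π u)).V := by
        rw [hF]
        simp only [if_pos he]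
        infer_instance
      refine Sigma.ext hpi ?_
      exact @Subsingleton.helim _ _ hsub (congrArg (fun t => (F t).V) hpi) _ _
    by_cases hconst : ∀ u v : H.V, π u = π v
    · -- all vertices in a single part
      obtain ⟨a0, b0, hab0⟩ := h2
      by_cases he : Even (π a0).1
      · exact hab0 (key2 a0 b0 he (hconst a0 b0))
      · have hFa : F (π a0) = Atour (n + 1) := by
          rw [hF]; simp only [if_neg he]
        have hcont : (F (π a0)).Contains H :=
          part_contains f finj' hf' (π a0) (fun v => hconst v a0)
        rw [hFa] at hcont
        exact IH (n + 1) (by omega) hcont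
    · push_neg at hconst
      obtain ⟨a1, b1, hne1⟩ := hconst
      obtain ⟨a, b, hlt⟩ : ∃ a b : H.V, π a < π b := by
        rcases lt_or_gt_of_ne hne1 with h | h
        exacts [⟨a1, b1, h⟩, ⟨b1, a1, h⟩]
      set S : Finset H.V := Finset.univ.filter (fun v => Even (π v).1) with hSdef
      have memS : ∀ v, v ∈ S ↔ Even (π v).1 := by
        intro v; simp [hSdef]
      have adjS : ∀ u v, Even (π u).1 → Even (π v).1 → H.adj u v → π v < π u := by
        intro u v hu hv hadj
        have hne' : π u ≠ π v := fun he => H.irrefl v ((key2 u v hu he) ▸ hadj)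
        rcases (key u v hne').1 hadj with ⟨_, h2'⟩ | ⟨h1, _⟩
        · exact absurd ⟨hu, hv⟩ h2'
        · exact h1
      have adjSrev : ∀ u v, π v < π u → Even (π u).1 → Even (π v).1 → H.adj u v := by
        intro u v hlt' hu hv
        exact (key u v (ne_of_gt hlt')).2 (Or.inr ⟨hlt', hu, hv⟩)
      have adjF : ∀ u v, π u < π v → ¬(Even (π u).1 ∧ Even (π v).1) → H.adj u v := by
        intro u v h1 h2
        exact (key u v (ne_of_lt h1)).2 (Or.inl ⟨h1, h2⟩)
      by_cases hcard : 2 ≤ S.card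
      · apply hb
        refine ⟨S, hcard, ?_, ?_, ?_⟩
        · intro x hx y hy z hz hxy hyz
          have ex := (memS x).1 hx; have ey := (memS y).1 hy; have ez := (memS z).1 hz
          exact adjSrev x z (lt_trans (adjS y z ey ez hyz) (adjS x y ex ey hxy)) ex ez
        · intro v hv s hs t ht hsv hst
          have es := (memS s).1 hs; have et := (memS t).1 ht
          have ev' : ¬ Even (π v).1 := fun h => hv ((memS v).2 h)
          have h1 : π s ≠ π v := fun he => ev' (he ▸ es)
          have h2 : π s < π v := by
            rcases (key s v h1).1 hsv with ⟨h, _⟩ | ⟨_, _, hev⟩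
            · exact h
            · exact absurd hev ev'
          have h3 : π t < π s := adjS s t es et hst
          exact adjF t v (lt_trans h3 h2) (fun hc => ev' hc.2)
        · intro u hu v hv hcards
          have eu : ¬ Even (π u).1 := fun h => hu ((memS u).2 h)
          have ev' : ¬ Even (π v).1 := fun h => hv ((memS v).2 h)
          have hnsub : ¬ (S.filter (fun s => H.adj s v) ⊆ S.filter (fun s => H.adj s u)) :=
            fun hsub => absurd (Finset.card_le_card hsub) (not_le.2 hcards)
          obtain ⟨s, hs1, hs2⟩ := Finset.not_subset.1 hnsub
          rw [Finset.mem_filter] at hs1 hs2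
          have hsS : s ∈ S := hs1.1
          have es := (memS s).1 hsS
          have hsv : H.adj s v := hs1.2
          have hsu : ¬ H.adj s u := fun h => hs2 ⟨hsS, h⟩
          have h1 : π s ≠ π v := fun he => ev' (he ▸ es)
          have h2 : π s < π v := by
            rcases (key s v h1).1 hsv with ⟨h, _⟩ | ⟨_, _, hev⟩
            · exact h
            · exact absurd hev ev'
          have h1' : π u ≠ π s := fun he => eu (he ▸ es)
          have hus : H.adj u s := by
            rcases H.total u s (fun he => h1' (congrArg π he)) with h | h
            · exact h
            · exact absurd h hsu
          have h3 : π u < π s := by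
            rcases (key u s h1').1 hus with ⟨h, _⟩ | ⟨_, hev, _⟩
            · exact h
            · exact absurd hev eu
          exact adjF u v (lt_trans h3 h2) (fun hc => eu hc.1)
      · apply hs
        refine ⟨Finset.univ.filter (fun v => π v ≤ π a), ⟨a, ?_⟩, ⟨b, ?_⟩, ?_⟩
        · simp
        · simp [hlt, not_le.2 hlt]
        · intro x hx y hy
          rw [Finset.mem_filter] at hx hy
          have hxa : π x ≤ π a := hx.2
          have hya : π a < π y := lt_of_not_ge (fun h => hy ⟨Finset.mem_univ y, h⟩)
          apply adjF x y (lt_of_le_of_lt hxa hya)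
          rintro ⟨ex, ey⟩
          have hxS : x ∈ S := (memS x).2 ex
          have hyS : y ∈ S := (memS y).2 ey
          have hxy : x ≠ y := fun he =>
            absurd (he ▸ (lt_of_le_of_lt hxa hya)) (lt_irrefl _)
          exact hcard (Finset.one_lt_card.2 ⟨x, hxS, y, hyS, hxy⟩)

end Tournament

namespace Tournament

/-! ### Positive results: `U₃` and `Δ₂` are in `𝒜`. -/

lemma atour3_eq : Atour 3 = deltaSum (fun t : Fin (2 * 3 - 1) =>
    if Even t.1 then oneTour else Atour 2) := rfl

lemma atour4_eq : Atour 4 = deltaSum (fun t : Fin 7 =>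
    if Even t.1 then oneTour else Atour 3) := rfl

lemma atour3_contains_u3 : (Atour 3).Contains (Utour 3) := by
  rw [atour3_eq]
  refine deltaEmbed (fun i => i) (fun i j h => h) ?_
  intro i
  by_cases h : Even i.1
  · rw [if_pos h]
    exact contains_refl oneTour
  · rw [if_neg h]
    exact contains_one _ (atour_nonempty 2)

lemma u3_contains_L2 : (Utour 3).Contains (linTour 2) := by
  have hadj : (Utour 3).adj ⟨0, ()⟩ ⟨1, ()⟩ := Or.inl (by decide)
  exact contains_L2 _ hadj

lemma atour3_contains_L2 : (Atour 3).Contains (linTour 2) :=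
  contains_trans atour3_contains_u3 u3_contains_L2

/-- The auxiliary tournament with parts `I,I,I,L₂,I,I,I`. -/
def T7 : Tournament :=
  deltaSum ![oneTour, oneTour, oneTour, linTour 2, oneTour, oneTour, oneTour]

lemma atour4_contains_t7 : (Atour 4).Contains T7 := by
  rw [atour4_eq]
  refine deltaEmbed (fun i => i) (fun i j h => h) ?_
  intro i
  fin_cases i
  · exact contains_refl oneTour
  · exact contains_one _ (atour_nonempty 3)
  · exact contains_refl oneTour
  · exact atour3_contains_L2
  · exact contains_refl oneTour
  · exact contains_one _ (atour_nonempty 3)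
  · exact contains_refl oneTour

instance : DecidableEq delta2.V :=
  inferInstanceAs (DecidableEq (deltaSum ![linTour 2, linTour 2, linTour 2]).V)
instance : DecidableRel delta2.adj := fun a b =>
  deltaSumDecAdj ![linTour 2, linTour 2, linTour 2] a b
instance : DecidableEq T7.V :=
  inferInstanceAs
    (DecidableEq (deltaSum ![oneTour, oneTour, oneTour, linTour 2, oneTour, oneTour, oneTour]).V)
instance : DecidableRel T7.adj := fun a b =>
  deltaSumDecAdj ![oneTour, oneTour, oneTour, linTour 2, oneTour, oneTour, oneTour] a b

def embDelta2X : Fin 3 → Fin 2 → T7.V :=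
  ![![⟨6, ()⟩, ⟨4, ()⟩], ![⟨2, ()⟩, ⟨0, ()⟩], ![⟨3, (0 : Fin 2)⟩, ⟨3, (1 : Fin 2)⟩]]

/-- Explicit embedding of `Δ₂` into `T7`. -/
def embDelta2 : delta2.V → T7.V
  | ⟨⟨0, h⟩, u⟩ => embDelta2X ⟨0, h⟩ u
  | ⟨⟨1, h⟩, u⟩ => embDelta2X ⟨1, h⟩ u
  | ⟨⟨2, h⟩, u⟩ => embDelta2X ⟨2, h⟩ u
  | ⟨⟨_ + 3, h⟩, _⟩ => absurd h (by omega)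

lemma t7_contains_delta2 : T7.Contains delta2 :=
  ⟨embDelta2, by decide, by decide⟩

lemma atour4_contains_delta2 : (Atour 4).Contains delta2 :=
  contains_trans atour4_contains_t7 t7_contains_delta2

/-! ### Negative results -/

instance : DecidableEq Ntour.V := inferInstanceAs (DecidableEq (Fin 5))
instance : DecidableRel Ntour.adj := fun i j => inferInstanceAs (Decidable (_ = true))
instance : DecidableEq Stour3.V := inferInstanceAs (DecidableEq (Fin 5))
instance : DecidableRel Stour3.adj := fun i j => inferInstanceAs (Decidable (_ ∨ _))

/-- A copy of `D₃` with vertex set `Fin 7`. -/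
def D3mat : Fin 7 → Fin 7 → Bool :=
  ![![false, true, true, true, false, false, false],
    ![false, false, true, false, true, true, true],
    ![false, false, false, true, true, true, true],
    ![false, true, false, false, true, true, true],
    ![true, false, false, false, false, true, false],
    ![true, false, false, false, false, false, true],
    ![true, false, false, false, true, false, false]]

def D3' : Tournament where
  V := Fin 7
  adj i j := D3mat i j = true
  irrefl := by decide
  total := by decide
  asymm := by decide

instance : DecidableEq D3'.V := inferInstanceAs (DecidableEq (Fin 7))
instance : DecidableRel D3'.adj := fun i j => inferInstanceAs (Decidable (_ = true))

instance : DecidableEq (Dtour 2).V :=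
  inferInstanceAs (DecidableEq (deltaSum ![oneTour, oneTour, oneTour]).V)
instance : DecidableRel (Dtour 2).adj := fun a b =>
  deltaSumDecAdj ![oneTour, oneTour, oneTour] a b
instance : DecidableEq (Dtour 3).V :=
  inferInstanceAs (DecidableEq (deltaSum ![oneTour, Dtour 2, Dtour 2]).V)
instance : DecidableRel (Dtour 3).adj := fun a b =>
  deltaSumDecAdj ![oneTour, Dtour 2, Dtour 2] a b

/-- Explicit embedding of the `Fin 7` copy of `D₃` into `Dtour 3`. -/
def embD3 : Fin 7 → (Dtour 3).V
  | ⟨0, _⟩ => ⟨0, ()⟩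
  | ⟨1, _⟩ => ⟨1, ⟨0, ()⟩⟩
  | ⟨2, _⟩ => ⟨1, ⟨1, ()⟩⟩
  | ⟨3, _⟩ => ⟨1, ⟨2, ()⟩⟩
  | ⟨4, _⟩ => ⟨2, ⟨0, ()⟩⟩
  | ⟨5, _⟩ => ⟨2, ⟨1, ()⟩⟩
  | ⟨6, _⟩ => ⟨2, ⟨2, ()⟩⟩
  | ⟨n + 7, h⟩ => absurd h (by omega)

lemma dtour3_contains_d3' : (Dtour 3).Contains D3' :=
  ⟨embD3, by
    letI : ∀ a b : D3'.V, Decidable (embD3 a = embD3 b → a = b) := fun a b => inferInstance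
    unfold Function.Injective; decide, by
    letI : ∀ u v : D3'.V, Decidable (D3'.adj u v ↔ (Dtour 3).adj (embD3 u) (embD3 v)) :=
      fun u v => inferInstance
    decide⟩

end Tournament

namespace Tournament

lemma d3'_not : ∀ n, ¬ (Atour n).Contains D3' :=
  not_contains_atour D3' (by decide) (by decide) (by decide)

lemma ntour_not : ∀ n, ¬ (Atour n).Contains Ntour :=
  not_contains_atour Ntour (by decide) (by decide) (by decide)

lemma stour3_not : ∀ n, ¬ (Atour n).Contains Stour3 :=
  not_contains_atour Stour3 (by decide) (by decide) (by decide)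

end Tournament

open Tournament in
/-- `𝒜` contains `U₃` and `Δ₂`, but contains none of `D₃`, `N`,
`S₃`. -/
theorem classA_contents :
    Utour 3 ∈ classA ∧ delta2 ∈ classA ∧
      Dtour 3 ∉ classA ∧ Ntour ∉ classA ∧ Stour3 ∉ classA := by
  refine ⟨⟨3, by norm_num, atour3_contains_u3⟩,
    ⟨4, by norm_num, atour4_contains_delta2⟩, ?_, ?_, ?_⟩
  · rintro ⟨n, -, hc⟩
    exact d3'_not n (contains_trans hc dtour3_contains_d3')
  · rintro ⟨n, -, hc⟩
    exact ntour_not n hc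
  · rintro ⟨n, -, hc⟩
    exact stour3_not n hc
end
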